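/- Let d, n be positive integers and α > 0. For every matrix Z ∈ ℝ^{d×n}, it holds that tr(Zᵀ(I + α·ZZᵀ)⁻²Z) ≤ min{d, n}/(4α). -/

import Mathlib

open Matrix

private lemma smul_posSemidef {d : ℕ} {α : ℝ} (hα : 0 ≤ α)
    {A : Matrix (Fin d) (Fin d) ℝ} (hA : A.PosSemidef) : (α • A).PosSemidef := by
  refine ⟨?_, fun x => ?_⟩
  · unfold Matrix.IsHermitian
    rw [conjTranspose_smul, hA.1]
    simp
  · have h := mul_nonneg hα (hA.2 x)
    simp only [Finsupp.mul_sum] at h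
    refine h.trans_eq ?_
    simp only [Matrix.smul_apply, smul_eq_mul]
    congr 1; ext i xi; congr 1; ext j xj; ring

private lemma key_bound (d n : ℕ) (α : ℝ) (hα : 0 < α)
    (Z : Matrix (Fin d) (Fin n) ℝ) :
    (Zᵀ * ((1 + α • (Z * Zᵀ))⁻¹) ^ 2 * Z).trace ≤ (d : ℝ) / (4 * α) := by
  classical
  set A := Z * Zᵀ with hAdef
  have hA : A.PosSemidef := by
    have := Matrix.posSemidef_self_mul_conjTranspose Z
    simpa [Matrix.conjTranspose_eq_transpose_of_trivial, hAdef] using this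
  set S := (1 : Matrix (Fin d) (Fin d) ℝ) + α • A with hSdef
  have hS : S.PosDef := Matrix.PosDef.add_posSemidef Matrix.PosDef.one (smul_posSemidef hα.le hA)
  have hdet : IsUnit S.det := (Matrix.isUnit_iff_isUnit_det S).mp hS.isUnit
  set B := S⁻¹ with hBdef
  have hSB : S * B = 1 := Matrix.mul_nonsing_inv S hdet
  have hBS : B * S = 1 := Matrix.nonsing_inv_mul S hdet
  have hBsymm : Bᵀ = B := by
    have hSsymm : Sᵀ = S := by
      have := hS.isHermitian
      simpa [Matrix.IsHermitian, Matrix.conjTranspose_eq_transpose_of_trivial] using this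
    rw [hBdef, Matrix.transpose_nonsing_inv, hSsymm]
  set C := (2 : ℝ) • B - 1 with hCdef
  have hBone : (1 : Matrix (Fin d) (Fin d) ℝ) - B = (α • A) * B := by
    have h1 : (α • A) * B = (S - 1) * B := by
      congr 1
      rw [hSdef, add_sub_cancel_left]
    rw [h1, Matrix.sub_mul, hSB, Matrix.one_mul]
  have hplug : α • (B * (A * B)) = B * ((1 : Matrix (Fin d) (Fin d) ℝ) - B) := by
    rw [hBone, smul_mul_assoc, mul_smul_comm]
  have hkey : (1 : Matrix (Fin d) (Fin d) ℝ) - C * C = (4 * α) • (B * (A * B)) := by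
    have e2 : (4 * α) • (B * (A * B)) = (4 : ℝ) • (B * ((1 : Matrix (Fin d) (Fin d) ℝ) - B)) := by
      rw [← hplug, smul_smul]
    rw [e2, hCdef, Matrix.mul_sub, Matrix.mul_one, Matrix.sub_mul, Matrix.mul_sub,
      Matrix.one_mul, Matrix.mul_one, smul_mul_assoc, mul_smul_comm, smul_smul]
    match_scalars <;> ring
  have htr1 : (Zᵀ * B ^ 2 * Z).trace = (B * (A * B)).trace := by
    calc (Zᵀ * B ^ 2 * Z).trace
        = (Z * (Zᵀ * B ^ 2)).trace := Matrix.trace_mul_comm _ _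
      _ = (B * (A * B)).trace := by
          rw [sq, hAdef, Matrix.trace_mul_comm B (Z * Zᵀ * B)]
          simp only [Matrix.mul_assoc]
  have htrC : 0 ≤ (C * C).trace := by
    have hCsymm : Cᵀ = C := by
      rw [hCdef, Matrix.transpose_sub, Matrix.transpose_smul, hBsymm, Matrix.transpose_one]
    have hCC : C * C = Cᵀ * C := by rw [hCsymm]
    rw [hCC, Matrix.trace]
    refine Finset.sum_nonneg fun i _ => ?_
    simp only [Matrix.diag_apply, Matrix.mul_apply, Matrix.transpose_apply]
    exact Finset.sum_nonneg fun j _ => mul_self_nonneg _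
  have htrace_eq : (4 * α) * (B * (A * B)).trace = (d : ℝ) - (C * C).trace := by
    have h := congrArg Matrix.trace hkey
    rw [Matrix.trace_sub, Matrix.trace_smul, Matrix.trace_one] at h
    simp only [smul_eq_mul, Finset.card_univ, Fintype.card_fin] at h
    linarith [h]
  rw [htr1, le_div_iff₀ (by positivity : (0:ℝ) < 4 * α)]
  nlinarith [htrC, htrace_eq]

private lemma pushthrough (d n : ℕ) (α : ℝ) (hα : 0 < α)
    (Z : Matrix (Fin d) (Fin n) ℝ) :
    (Zᵀ * ((1 + α • (Z * Zᵀ))⁻¹) ^ 2 * Z).trace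
      = (Z * ((1 + α • (Zᵀ * Z))⁻¹) ^ 2 * Zᵀ).trace := by
  classical
  set A := Z * Zᵀ with hAdef
  have hA : A.PosSemidef := by
    have := Matrix.posSemidef_self_mul_conjTranspose Z
    simpa [Matrix.conjTranspose_eq_transpose_of_trivial, hAdef] using this
  set S := (1 : Matrix (Fin d) (Fin d) ℝ) + α • A with hSdef
  have hS : S.PosDef := Matrix.PosDef.add_posSemidef Matrix.PosDef.one (smul_posSemidef hα.le hA)
  have hdetS : IsUnit S.det := (Matrix.isUnit_iff_isUnit_det S).mp hS.isUnit
  have hA' : (Zᵀ * Z).PosSemidef := by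
    have := Matrix.posSemidef_conjTranspose_mul_self Z
    simpa [Matrix.conjTranspose_eq_transpose_of_trivial] using this
  set T := (1 : Matrix (Fin n) (Fin n) ℝ) + α • (Zᵀ * Z) with hTdef
  have hT : T.PosDef := Matrix.PosDef.add_posSemidef Matrix.PosDef.one (smul_posSemidef hα.le hA')
  have hdetT : IsUnit T.det := (Matrix.isUnit_iff_isUnit_det T).mp hT.isUnit
  have hSB : S * S⁻¹ = 1 := Matrix.mul_nonsing_inv S hdetS
  have hTinv : T⁻¹ * T = 1 := Matrix.nonsing_inv_mul T hdetT
  have hpt : Zᵀ * S = T * Zᵀ := by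
    rw [hSdef, hTdef, Matrix.mul_add, Matrix.add_mul, Matrix.mul_one, Matrix.one_mul,
      Matrix.mul_smul, Matrix.smul_mul, hAdef, ← Matrix.mul_assoc, Matrix.mul_assoc]
  have hpt2 : Zᵀ * S⁻¹ = T⁻¹ * Zᵀ := by
    calc Zᵀ * S⁻¹ = (T⁻¹ * T) * Zᵀ * S⁻¹ := by rw [hTinv, Matrix.one_mul]
      _ = T⁻¹ * (T * Zᵀ) * S⁻¹ := by rw [Matrix.mul_assoc T⁻¹ T Zᵀ]
      _ = T⁻¹ * (Zᵀ * S) * S⁻¹ := by rw [hpt]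
      _ = T⁻¹ * Zᵀ * (S * S⁻¹) := by simp only [← Matrix.mul_assoc]
      _ = T⁻¹ * Zᵀ := by rw [hSB, Matrix.mul_one]
  have hpt2' : ∀ {k : ℕ} (X : Matrix (Fin d) (Fin k) ℝ),
      Zᵀ * (S⁻¹ * X) = T⁻¹ * (Zᵀ * X) := by
    intro k X
    rw [← Matrix.mul_assoc, hpt2, Matrix.mul_assoc]
  have hmain : Zᵀ * (S⁻¹) ^ 2 * Z = T⁻¹ ^ 2 * (Zᵀ * Z) := by
    rw [sq, sq, Matrix.mul_assoc, Matrix.mul_assoc, hpt2' (S⁻¹ * Z), hpt2' Z,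
      ← Matrix.mul_assoc]
  calc (Zᵀ * (S⁻¹) ^ 2 * Z).trace
      = (T⁻¹ ^ 2 * (Zᵀ * Z)).trace := by rw [hmain]
    _ = ((Zᵀ * Z) * T⁻¹ ^ 2).trace := Matrix.trace_mul_comm _ _
    _ = (Zᵀ * (Z * T⁻¹ ^ 2)).trace := by rw [Matrix.mul_assoc]
    _ = ((Z * T⁻¹ ^ 2) * Zᵀ).trace := Matrix.trace_mul_comm _ _

/-- For any `Z ∈ ℝ^{d×n}` and `α > 0`,
`tr(Zᵀ (I + α ZZᵀ)⁻² Z) ≤ min{d,n}/(4α)`. -/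
theorem stmt_7 (d n : ℕ) (hd : 0 < d) (hn : 0 < n) (α : ℝ) (hα : 0 < α)
    (Z : Matrix (Fin d) (Fin n) ℝ) :
    (Zᵀ * ((1 + α • (Z * Zᵀ))⁻¹) ^ 2 * Z).trace ≤ ((min d n : ℕ) : ℝ) / (4 * α) := by
  rcases le_total d n with h | h
  · rw [min_eq_left h]
    exact key_bound d n α hα Z
  · rw [min_eq_right h]
    rw [pushthrough d n α hα Z]
    have := key_bound n d α hα Zᵀ
    simpa using this
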